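/- Let π be a permutation of Fin n which is an n-cycle (i.e., the map k ↦ π^k 0, for k = 0, …, n−1, is a bijection of Fin n), let τ₀ = id be the identity permutation, and suppose a i (π i) * a i i ≠ 0 for all i : Fin n. Let π* be the cyclic shift permutation of Fin n given by π* i = i + 1 (addition in Fin n), and define a' : Fin n → Fin n → ℝ by a' i (i + 1) = a (π^i 0) (π^(i+1) 0) and a' i i = a (π^i 0) (π^i 0) (and a' arbitrary, say 0, elsewhere). Then the linear equivalence of Fin n → ℝ sending the standard basis vector e_i to e_{π^i 0} is an isomorphism of non-unital non-associative ℝ-algebras from E^n_{π*,τ₀}(a') onto E^n_{π,τ₀}(a); in particular E^n_{π,τ₀}(a) is isomorphic to the evolution algebra with multiplication table e'_i * e'_i = a (π^i 0) (π^(i+1) 0) • e'_{i+1} + a (π^i 0) (π^i 0) • e'_i, e'_i * e'_j = 0 for i ≠ j. -/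

import Mathlib

/-- The product of the evolution algebra `E_{π,τ}(a)` on a finite type `ι`. -/
noncomputable def evolMul {ι : Type*} [Fintype ι] [DecidableEq ι]
    (π τ : Equiv.Perm ι) (a : ι → ι → ℝ) (x y : ι → ℝ) : ι → ℝ :=
  fun j => ∑ i, x i * y i *
    ((if π i = j then a i (π i) else 0) + (if τ i = j then a i (τ i) else 0))

/-- for an `n`-cycle `π`, identity `τ₀` and structural constants with
`a i (π i) * a i i ≠ 0`, the evolution algebra `E^n_{π,τ₀}(a)` is isomorphic, via the
linear equivalence sending `e_i` to `e_{π^i 0}`, to `E^n_{π*,τ₀}(a')` where `π*` is the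
cyclic shift `i ↦ i + 1` and `a' i (i+1) = a (π^i 0) (π^(i+1) 0)`,
`a' i i = a (π^i 0) (π^i 0)`. -/
theorem stmt_16 (n : ℕ) [NeZero n] (π : Equiv.Perm (Fin n))
    (hπ : Function.Bijective (fun k : Fin n => (π ^ (k : ℕ)) 0))
    (a : Fin n → Fin n → ℝ)
    (ha : ∀ i : Fin n, a i (π i) * a i i ≠ 0)
    (πs : Equiv.Perm (Fin n)) (hπs : ∀ i : Fin n, πs i = i + 1)
    (a' : Fin n → Fin n → ℝ)
    (ha'1 : ∀ i : Fin n, a' i (i + 1) = a ((π ^ (i : ℕ)) 0) ((π ^ ((i : ℕ) + 1)) 0))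
    (ha'2 : ∀ i : Fin n, a' i i = a ((π ^ (i : ℕ)) 0) ((π ^ (i : ℕ)) 0)) :
    ∃ e : (Fin n → ℝ) ≃ₗ[ℝ] (Fin n → ℝ),
      (∀ i : Fin n, e (Pi.single i 1) = Pi.single ((π ^ (i : ℕ)) 0) (1 : ℝ)) ∧
      (∀ x y : Fin n → ℝ, e (evolMul πs 1 a' x y) = evolMul π 1 a (e x) (e y)) := by
  classical
  set σ : Fin n ≃ Fin n := Equiv.ofBijective _ hπ with hσdef
  have hσap : ∀ i : Fin n, σ i = (π ^ (i : ℕ)) 0 := fun i => rfl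
  -- π^n fixes 0
  have hn : (π ^ n) 0 = 0 := by
    obtain ⟨k, hk⟩ := hπ.surjective ((π ^ n) 0)
    have hk' : (π ^ (k : ℕ)) 0 = (π ^ n) 0 := hk
    rcases Nat.eq_zero_or_pos (k : ℕ) with h0 | hpos
    · rw [← hk', h0, pow_zero]; rfl
    · exfalso
      have h1 : (π ^ (k : ℕ)) ((π ^ (n - (k : ℕ))) 0) = (π ^ (k : ℕ)) 0 := by
        rw [← Equiv.Perm.mul_apply, ← pow_add, Nat.add_sub_cancel' k.isLt.le]
        exact hk'.symm
      have h2 : (π ^ (n - (k : ℕ))) 0 = 0 := (Equiv.injective _) h1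
      have hlt : n - (k : ℕ) < n := by omega
      have h3 : (⟨n - (k : ℕ), hlt⟩ : Fin n) = ⟨0, Nat.pos_of_neZero n⟩ := by
        apply hπ.injective
        simpa using h2
      have := Fin.mk.injEq (n - (k : ℕ)) hlt 0 (Nat.pos_of_neZero n) ▸ h3
      omega
  have hpowq : ∀ q : ℕ, ((π ^ n) ^ q) 0 = 0 := by
    intro q
    induction q with
    | zero => rfl
    | succ q ih => rw [pow_succ, Equiv.Perm.mul_apply, hn, ih]
  have hmod : ∀ m : ℕ, (π ^ m) 0 = (π ^ (m % n)) 0 := by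
    intro m
    conv_lhs => rw [← Nat.mod_add_div m n]
    rw [pow_add, Equiv.Perm.mul_apply, pow_mul, hpowq]
  have hval : ∀ i : Fin n, ((i + 1 : Fin n) : ℕ) = ((i : ℕ) + 1) % n := by
    intro i
    rw [Fin.add_def]
    simp [Fin.val_one', Nat.add_mod]
  have hsucc : ∀ i : Fin n, π (σ i) = (π ^ ((i : ℕ) + 1)) 0 := by
    intro i
    rw [hσap, ← Equiv.Perm.mul_apply, ← pow_succ']
  have hkey : ∀ i : Fin n, π (σ i) = σ (i + 1) := by
    intro i
    rw [hsucc, hσap, hval, ← hmod]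
  refine ⟨LinearEquiv.funCongrLeft ℝ ℝ σ.symm, ?_, ?_⟩
  · intro i
    funext j
    simp only [LinearEquiv.funCongrLeft_apply, LinearMap.funLeft_apply]
    rw [← hσap]
    simp [Pi.single_apply, Equiv.symm_apply_eq]
  · intro x y
    funext j
    simp only [LinearEquiv.funCongrLeft_apply, LinearMap.funLeft_apply, evolMul]
    refine Fintype.sum_equiv σ _ _ ?_
    intro i
    simp only [Equiv.symm_apply_apply, Equiv.Perm.one_apply, hπs]
    congr 1
    congr 1
    · rcases eq_or_ne (π (σ i)) j with h | h
      · have h' : i + 1 = σ.symm j := by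
          rw [← h, hkey]; simp
        rw [if_pos h, if_pos h', ha'1, ← hσap, ← hsucc i, h]
      · have h' : ¬ (i + 1 = σ.symm j) := by
          intro hc
          exact h (by rw [hkey, hc]; simp)
        rw [if_neg h, if_neg h']
    · rcases eq_or_ne (σ i) j with h | h
      · have h' : i = σ.symm j := by rw [← h]; simp
        exact (if_pos h').trans ((by rw [ha'2, ← hσap, h] : a' i i = a (σ i) (σ i)).trans (if_pos h).symm)
      · have h' : ¬ (i = σ.symm j) := by
          intro hc
          exact h (by rw [hc]; simp)
        exact (if_neg h').trans (if_neg h).symm
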